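/- Injectivity of Paillier encryption in the message coordinate: with n = pq (p ≠ q primes) and g = 1+n, if (1+n)^{m₁}·ζ₁ⁿ ≡ (1+n)^{m₂}·ζ₂ⁿ (mod n²) with m₁, m₂ < n and ζ₁, ζ₂ units coprime to n, and gcd(n, (p−1)(q−1)) = 1, then m₁ = m₂. -/

import Mathlib

/-- Injectivity of Paillier encryption in the message coordinate: two
encryptions of messages `m₁, m₂ < n` that coincide in `ZMod (n²)` must
encrypt the same message. -/
theorem paillier_message_injective (p q : ℕ) (hp : p.Prime) (hq : q.Prime)
    (hne : p ≠ q) (n : ℕ) (hn : n = p * q)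
    (hco : Nat.Coprime n ((p - 1) * (q - 1)))
    (m₁ m₂ : ℕ) (hm₁ : m₁ < n) (hm₂ : m₂ < n)
    (ζ₁ ζ₂ : (ZMod (n ^ 2))ˣ)
    (heq : (1 + (n : ZMod (n ^ 2))) ^ m₁ * (ζ₁ : ZMod (n ^ 2)) ^ n
         = (1 + (n : ZMod (n ^ 2))) ^ m₂ * (ζ₂ : ZMod (n ^ 2)) ^ n) :
    m₁ = m₂ := by
  have hn0 : 0 < n := by
    rw [hn]; exact Nat.mul_pos hp.pos hq.pos
  haveI : NeZero (n ^ 2) := ⟨by positivity⟩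
  set l := (p - 1) * (q - 1) with hl
  -- totient of n^2
  have htot : Nat.totient (n ^ 2) = n * l := by
    have hcpq : Nat.Coprime (p ^ 2) (q ^ 2) :=
      Nat.Coprime.pow 2 2 ((Nat.coprime_primes hp hq).mpr hne)
    rw [hn, mul_pow, Nat.totient_mul hcpq,
      Nat.totient_prime_pow hp (by norm_num), Nat.totient_prime_pow hq (by norm_num), hl]
    ring
  -- (1+n)^k = 1 + k*n in ZMod n^2
  have hnsq : (n : ZMod (n ^ 2)) * (n : ZMod (n ^ 2)) = 0 := by
    have h0 : ((n ^ 2 : ℕ) : ZMod (n ^ 2)) = 0 := ZMod.natCast_self _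
    push_cast at h0
    rw [← h0]; ring
  have hbin : ∀ k : ℕ, (1 + (n : ZMod (n ^ 2))) ^ k = 1 + (k : ZMod (n ^ 2)) * n := by
    intro k
    induction k with
    | zero => simp
    | succ k ih =>
      have h2 : (1 + (n : ZMod (n ^ 2))) ^ (k + 1)
          = (1 + (k : ZMod (n ^ 2)) * n) * (1 + n) := by rw [pow_succ (1 + (n : ZMod (n ^ 2))) k, ih]
      rw [h2]
      push_cast
      linear_combination (k : ZMod (n ^ 2)) * hnsq
  -- kill the units by raising to the power l
  have hunit : ∀ ζ : (ZMod (n ^ 2))ˣ, ((ζ : ZMod (n ^ 2)) ^ n) ^ l = 1 := by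
    intro ζ
    have h1 : ζ ^ (n * l) = 1 := by
      rw [← htot]; exact ZMod.pow_totient ζ
    calc ((ζ : ZMod (n ^ 2)) ^ n) ^ l = ((ζ ^ (n * l) : (ZMod (n ^ 2))ˣ) : ZMod (n ^ 2)) := by
          push_cast; rw [← pow_mul]
      _ = 1 := by rw [h1]; rfl
  have heq2 : (1 + (n : ZMod (n ^ 2))) ^ (m₁ * l) = (1 + (n : ZMod (n ^ 2))) ^ (m₂ * l) := by
    have h := congrArg (· ^ l) heq
    simpa [mul_pow, pow_mul, hunit] using h
  rw [hbin, hbin] at heq2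
  have heq3 : ((m₁ * l * n : ℕ) : ZMod (n ^ 2)) = ((m₂ * l * n : ℕ) : ZMod (n ^ 2)) := by
    have h := add_left_cancel heq2
    push_cast at h ⊢
    linear_combination h
  have hmod : (m₁ * l * n) ≡ (m₂ * l * n) [MOD n ^ 2] :=
    (ZMod.natCast_eq_natCast_iff _ _ _).mp heq3
  have hdvd : ((n : ℤ) * n) ∣ ((m₂ : ℤ) * l - (m₁ : ℤ) * l) * n := by
    have h := (Nat.modEq_iff_dvd).mp hmod
    have e1 : ((n ^ 2 : ℕ) : ℤ) = (n : ℤ) * n := by push_cast; ring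
    have e2 : ((m₂ * l * n : ℕ) : ℤ) - ((m₁ * l * n : ℕ) : ℤ)
        = ((m₂ : ℤ) * l - (m₁ : ℤ) * l) * n := by push_cast; ring
    rw [e1, e2] at h
    exact h
  have hne' : (n : ℤ) ≠ 0 := by exact_mod_cast hn0.ne'
  have hdvd2 : (n : ℤ) ∣ ((m₂ : ℤ) - m₁) * l := by
    have h := (mul_dvd_mul_iff_right hne').mp hdvd
    convert h using 1
    · rfl
    ring
  have hcop : IsCoprime (n : ℤ) (l : ℤ) := by
    exact_mod_cast Nat.isCoprime_iff_coprime.mpr hco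
  have hdvd3 : (n : ℤ) ∣ ((m₂ : ℤ) - m₁) := hcop.dvd_of_dvd_mul_right hdvd2
  have hfin : m₁ ≡ m₂ [MOD n] := (Nat.modEq_iff_dvd).mpr hdvd3
  exact hfin.eq_of_lt_of_lt hm₁ hm₂
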